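/- Let d ≥ 2 and ω ∈ C²(ℝ^d \ {0}, ℝ). Let (v̄, v̄*) be a pair of nonzero vectors with ∇ω(v̄) ≠ ∇ω(v̄*). Then there exists a bounded neighborhood U of (v̄, v̄*) contained in the set A = {(v,v*) : ∇ω(v) ≠ ∇ω(v*)}, a neighborhood V ⊂ ℝ^{d-1} of 0, and a C² function ψ : ℝ^d × ℝ^d × ℝ^{d-1} → ℝ^d such that for all (v,v*) ∈ U and σ ∈ V: ψ(v,v*,0) = 0, ω(v) + ω(v*) = ω(v − ψ(v,v*,σ)) + ω(v* + ψ(v,v*,σ)), and the Jacobian D_σψ(v,v*,0) has rank d−1. -/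

import Mathlib

open Function

section Aux

variable {d : ℕ}

/-- The injection `Fin (d-1) → Fin d` avoiding the index `i`. -/
private def emb (hd : 2 ≤ d) (i : Fin d) (k : Fin (d - 1)) : Fin d :=
  Fin.cast (by omega) ((Fin.cast (by omega : d = d - 1 + 1) i).succAbove k)

private lemma emb_ne (hd : 2 ≤ d) (i : Fin d) (k : Fin (d - 1)) : emb hd i k ≠ i := by
  have h := Fin.succAbove_ne (Fin.cast (by omega : d = d - 1 + 1) i) k
  simp only [Ne, Fin.ext_iff, emb, Fin.coe_cast] at h ⊢
  exact h

private lemma emb_inj (hd : 2 ≤ d) (i : Fin d) : Function.Injective (emb hd i) := by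
  intro k k' h
  simp only [emb, Fin.ext_iff, Fin.coe_cast] at h
  exact Fin.succAbove_right_injective (Fin.ext h)

/-- Linear embedding of `ℝ^{d-1}` into `ℝ^d` with `i`-th coordinate `0`. -/
private noncomputable def iota (hd : 2 ≤ d) (i : Fin d) (σ : Fin (d - 1) → ℝ) :
    Fin d → ℝ :=
  ∑ k : Fin (d - 1), σ k • (Pi.single (emb hd i k) 1 : Fin d → ℝ)

private lemma iota_apply_i (hd : 2 ≤ d) (i : Fin d) (σ : Fin (d - 1) → ℝ) :
    iota hd i σ i = 0 := by
  simp only [iota, Finset.sum_apply, Pi.smul_apply, smul_eq_mul]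
  refine Finset.sum_eq_zero fun k _ => ?_
  rw [Pi.single_eq_of_ne (Ne.symm (emb_ne hd i k))]
  ring

private lemma iota_apply_emb (hd : 2 ≤ d) (i : Fin d) (σ : Fin (d - 1) → ℝ)
    (k : Fin (d - 1)) : iota hd i σ (emb hd i k) = σ k := by
  simp only [iota, Finset.sum_apply, Pi.smul_apply, smul_eq_mul]
  rw [Finset.sum_eq_single k]
  · rw [Pi.single_eq_same]; ring
  · intro k' _ hk'
    rw [Pi.single_eq_of_ne (fun h => hk' (emb_inj hd i h).symm)]
    ring
  · intro h; exact absurd (Finset.mem_univ k) h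

private lemma iota_zero (hd : 2 ≤ d) (i : Fin d) : iota hd i 0 = 0 := by
  simp [iota]

private lemma contDiff_iota (hd : 2 ≤ d) (i : Fin d) {n : WithTop ℕ∞} :
    ContDiff ℝ n (iota hd i) := by
  unfold iota
  apply ContDiff.sum
  intro k _
  exact ((ContinuousLinearMap.proj (R := ℝ) (φ := fun _ : Fin (d-1) => ℝ) k).contDiff).smul
    contDiff_const

/-- The collision functional. -/
private def Phi (ω : (Fin d → ℝ) → ℝ)
    (x : ((Fin d → ℝ) × (Fin d → ℝ)) × (Fin d → ℝ)) : ℝ :=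
  ω x.1.1 + ω x.1.2 - ω (x.1.1 - x.2) - ω (x.1.2 + x.2)

/-- The auxiliary map to be inverted. -/
private noncomputable def Gmap (ω : (Fin d → ℝ) → ℝ) (i : Fin d)
    (x : ((Fin d → ℝ) × (Fin d → ℝ)) × (Fin d → ℝ)) :
    ((Fin d → ℝ) × (Fin d → ℝ)) × (Fin d → ℝ) :=
  (x.1, x.2 + (Phi ω x - x.2 i) • (Pi.single i 1 : Fin d → ℝ))

private lemma Phi_zero (ω : (Fin d → ℝ) → ℝ) (p : (Fin d → ℝ) × (Fin d → ℝ)) :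
    Phi ω (p, 0) = 0 := by
  simp [Phi]

private lemma Gmap_zero (ω : (Fin d → ℝ) → ℝ) (i : Fin d)
    (p : (Fin d → ℝ) × (Fin d → ℝ)) : Gmap ω i (p, 0) = (p, 0) := by
  simp [Gmap, Phi_zero]

end Aux

set_option maxHeartbeats 2000000 in
theorem stmt_0 (d : ℕ) (hd : 2 ≤ d) (ω : (Fin d → ℝ) → ℝ)
    (hω : ContDiffOn ℝ 2 ω {v : Fin d → ℝ | v ≠ 0})
    (v₀ w₀ : Fin d → ℝ) (hv₀ : v₀ ≠ 0) (hw₀ : w₀ ≠ 0)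
    (hgrad : fderiv ℝ ω v₀ ≠ fderiv ℝ ω w₀) :
    ∃ (U : Set ((Fin d → ℝ) × (Fin d → ℝ))) (V : Set (Fin (d - 1) → ℝ))
      (ψ : (Fin d → ℝ) → (Fin d → ℝ) → (Fin (d - 1) → ℝ) → (Fin d → ℝ)),
      IsOpen U ∧ (v₀, w₀) ∈ U ∧ Bornology.IsBounded U ∧
      U ⊆ {p : (Fin d → ℝ) × (Fin d → ℝ) |
        p.1 ≠ 0 ∧ p.2 ≠ 0 ∧ fderiv ℝ ω p.1 ≠ fderiv ℝ ω p.2} ∧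
      IsOpen V ∧ (0 : Fin (d - 1) → ℝ) ∈ V ∧
      ContDiff ℝ 2
        (fun p : ((Fin d → ℝ) × (Fin d → ℝ)) × (Fin (d - 1) → ℝ) => ψ p.1.1 p.1.2 p.2) ∧
      (∀ v w, (v, w) ∈ U → ψ v w 0 = 0 ∧
        ∀ σ ∈ V, ω v + ω w = ω (v - ψ v w σ) + ω (w + ψ v w σ)) ∧
      (∀ v w, (v, w) ∈ U →
        LinearMap.rank
          ((fderiv ℝ (fun σ => ψ v w σ) 0 : (Fin (d - 1) → ℝ) →L[ℝ] (Fin d → ℝ)) :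
            (Fin (d - 1) → ℝ) →ₗ[ℝ] (Fin d → ℝ)) = ((d - 1 : ℕ) : Cardinal)) := by
  classical
  -- notation
  have hopen0 : IsOpen {v : Fin d → ℝ | v ≠ 0} := isOpen_compl_singleton
  have hωv : ContDiffAt ℝ 2 ω v₀ := hω.contDiffAt (hopen0.mem_nhds hv₀)
  have hωw : ContDiffAt ℝ 2 ω w₀ := hω.contDiffAt (hopen0.mem_nhds hw₀)
  have hDv : HasFDerivAt ω (fderiv ℝ ω v₀) v₀ :=
    (hωv.differentiableAt two_ne_zero).hasFDerivAt
  have hDw : HasFDerivAt ω (fderiv ℝ ω w₀) w₀ :=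
    (hωw.differentiableAt two_ne_zero).hasFDerivAt
  set Dv := fderiv ℝ ω v₀ with hDvdef
  set Dw := fderiv ℝ ω w₀ with hDwdef
  -- a coordinate on which the gradients differ
  obtain ⟨i, hi⟩ : ∃ i : Fin d, Dv (Pi.single i 1) - Dw (Pi.single i 1) ≠ 0 := by
    by_contra h
    push_neg at h
    apply hgrad
    ext x
    have hx : x = ∑ j : Fin d, x j • (Pi.single j 1 : Fin d → ℝ) := by
      conv_lhs => rw [← Finset.univ_sum_single x]
      refine Finset.sum_congr rfl fun j _ => ?_
      rw [← Pi.single_smul, smul_eq_mul, mul_one]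
    rw [hx, map_sum, map_sum]
    refine Finset.sum_congr rfl fun j _ => ?_
    rw [map_smul, map_smul]
    have := h j
    have : Dv (Pi.single j 1) = Dw (Pi.single j 1) := by linarith
    rw [this]
  -- continuous linear projections
  set A1 : (((Fin d → ℝ) × (Fin d → ℝ)) × (Fin d → ℝ)) →L[ℝ] (Fin d → ℝ) :=
    (ContinuousLinearMap.fst ℝ (Fin d → ℝ) (Fin d → ℝ)).comp
      (ContinuousLinearMap.fst ℝ ((Fin d → ℝ) × (Fin d → ℝ)) (Fin d → ℝ)) with hA1def
  set A2 : (((Fin d → ℝ) × (Fin d → ℝ)) × (Fin d → ℝ)) →L[ℝ] (Fin d → ℝ) :=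
    (ContinuousLinearMap.snd ℝ (Fin d → ℝ) (Fin d → ℝ)).comp
      (ContinuousLinearMap.fst ℝ ((Fin d → ℝ) × (Fin d → ℝ)) (Fin d → ℝ)) with hA2def
  set A3 : (((Fin d → ℝ) × (Fin d → ℝ)) × (Fin d → ℝ)) →L[ℝ] (Fin d → ℝ) :=
    ContinuousLinearMap.snd ℝ ((Fin d → ℝ) × (Fin d → ℝ)) (Fin d → ℝ) with hA3def
  set Pri : (Fin d → ℝ) →L[ℝ] ℝ := ContinuousLinearMap.proj i with hPridef
  -- derivative of Phi at the base point
  have h1 : HasFDerivAt (fun x : ((Fin d → ℝ) × (Fin d → ℝ)) × (Fin d → ℝ) => ω x.1.1)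
      (Dv.comp A1) ((v₀, w₀), 0) := hDv.comp _ A1.hasFDerivAt
  have h2 : HasFDerivAt (fun x : ((Fin d → ℝ) × (Fin d → ℝ)) × (Fin d → ℝ) => ω x.1.2)
      (Dw.comp A2) ((v₀, w₀), 0) := hDw.comp _ A2.hasFDerivAt
  have h3 : HasFDerivAt (fun x : ((Fin d → ℝ) × (Fin d → ℝ)) × (Fin d → ℝ) =>
      ω (x.1.1 - x.2)) (Dv.comp (A1 - A3)) ((v₀, w₀), 0) := by
    have hD : HasFDerivAt ω Dv (v₀ - 0) := by rwa [sub_zero]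
    have hin : HasFDerivAt
        (fun x : ((Fin d → ℝ) × (Fin d → ℝ)) × (Fin d → ℝ) => x.1.1 - x.2) (A1 - A3)
        ((v₀, w₀), 0) := A1.hasFDerivAt.sub A3.hasFDerivAt
    exact HasFDerivAt.comp (((v₀, w₀), 0)) hD hin
  have h4 : HasFDerivAt (fun x : ((Fin d → ℝ) × (Fin d → ℝ)) × (Fin d → ℝ) =>
      ω (x.1.2 + x.2)) (Dw.comp (A2 + A3)) ((v₀, w₀), 0) := by
    have hD : HasFDerivAt ω Dw (w₀ + 0) := by rwa [add_zero]
    have hin : HasFDerivAt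
        (fun x : ((Fin d → ℝ) × (Fin d → ℝ)) × (Fin d → ℝ) => x.1.2 + x.2) (A2 + A3)
        ((v₀, w₀), 0) := A2.hasFDerivAt.add A3.hasFDerivAt
    exact HasFDerivAt.comp (((v₀, w₀), 0)) hD hin
  set Φ' : (((Fin d → ℝ) × (Fin d → ℝ)) × (Fin d → ℝ)) →L[ℝ] ℝ :=
    Dv.comp A1 + Dw.comp A2 - Dv.comp (A1 - A3) - Dw.comp (A2 + A3) with hΦ'def
  have hΦ' : HasFDerivAt (Phi ω) Φ' ((v₀, w₀), 0) := ((h1.add h2).sub h3).sub h4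
  have hΦ'app : ∀ z, Φ' z = Dv z.2 - Dw z.2 := by
    intro z
    simp only [hΦ'def, ContinuousLinearMap.coe_sub', ContinuousLinearMap.coe_add',
      Pi.sub_apply, Pi.add_apply, ContinuousLinearMap.comp_apply, hA1def, hA2def, hA3def,
      ContinuousLinearMap.coe_fst', ContinuousLinearMap.coe_snd', map_sub, map_add]
    ring
  -- derivative of Gmap and its invertibility
  set G' : (((Fin d → ℝ) × (Fin d → ℝ)) × (Fin d → ℝ)) →L[ℝ]
      (((Fin d → ℝ) × (Fin d → ℝ)) × (Fin d → ℝ)) :=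
    (ContinuousLinearMap.fst ℝ ((Fin d → ℝ) × (Fin d → ℝ)) (Fin d → ℝ)).prod
      (A3 + (Φ' - Pri.comp A3).smulRight (Pi.single i 1)) with hG'def
  have hzi : HasFDerivAt (fun x : ((Fin d → ℝ) × (Fin d → ℝ)) × (Fin d → ℝ) => x.2 i)
      (Pri.comp A3) ((v₀, w₀), 0) := (Pri.comp A3).hasFDerivAt
  have hG' : HasFDerivAt (Gmap ω i) G' ((v₀, w₀), 0) := by
    exact (ContinuousLinearMap.fst ℝ _ _).hasFDerivAt.prodMk
      (A3.hasFDerivAt.add ((hΦ'.sub hzi).smul_const _))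
  have hG'app : ∀ z, G' z = (z.1, z.2 + (Φ' z - z.2 i) • (Pi.single i 1 : Fin d → ℝ)) := by
    intro z
    simp only [hG'def, ContinuousLinearMap.prod_apply, ContinuousLinearMap.coe_fst',
      ContinuousLinearMap.add_apply, ContinuousLinearMap.smulRight_apply,
      ContinuousLinearMap.coe_sub', Pi.sub_apply, ContinuousLinearMap.comp_apply, hA3def,
      ContinuousLinearMap.coe_snd', hPridef, ContinuousLinearMap.proj_apply]
  have hker : ∀ z, G' z = 0 → z = 0 := by
    intro z hz
    rw [hG'app] at hz
    have hz1 : z.1 = 0 := congrArg Prod.fst hz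
    have hz2 : z.2 + (Φ' z - z.2 i) • (Pi.single i 1 : Fin d → ℝ) = 0 := congrArg Prod.snd hz
    have hj : ∀ j, j ≠ i → z.2 j = 0 := by
      intro j hji
      have := congrFun hz2 j
      simpa [Pi.single_eq_of_ne hji] using this
    have hΦ0 : Φ' z = 0 := by
      have h := congrFun hz2 i
      simp only [Pi.add_apply, Pi.smul_apply, Pi.single_eq_same, smul_eq_mul, mul_one,
        Pi.zero_apply] at h
      linarith
    have hz2eq : z.2 = z.2 i • (Pi.single i 1 : Fin d → ℝ) := by
      funext j
      by_cases hji : j = i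
      · subst hji; simp
      · simp [Pi.single_eq_of_ne hji, hj j hji]
    have hmul : z.2 i * (Dv (Pi.single i 1) - Dw (Pi.single i 1)) = 0 := by
      have := hΦ0
      rw [hΦ'app, hz2eq, map_smul, map_smul] at this
      simpa [mul_sub] using this
    have hzi0 : z.2 i = 0 := by
      rcases mul_eq_zero.mp hmul with h | h
      · exact h
      · exact absurd h hi
    have hz20 : z.2 = 0 := by rw [hz2eq, hzi0, zero_smul]
    exact Prod.ext hz1 hz20
  have hinj : Function.Injective G' := by
    intro x y hxy
    have h0 : G' (x - y) = 0 := by rw [map_sub, hxy, sub_self]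
    exact sub_eq_zero.mp (hker _ h0)
  have hsurj : Function.Surjective G' :=
    (LinearMap.injective_iff_surjective
      (f := (G' : (((Fin d → ℝ) × (Fin d → ℝ)) × (Fin d → ℝ)) →ₗ[ℝ] _))).mp hinj
  set eqv := (LinearEquiv.ofBijective
    (G' : (((Fin d → ℝ) × (Fin d → ℝ)) × (Fin d → ℝ)) →ₗ[ℝ] (((Fin d → ℝ) × (Fin d → ℝ)) × (Fin d → ℝ)))
    ⟨hinj, hsurj⟩).toContinuousLinearEquiv with heqvdef
  have heqvcoe : (eqv : (((Fin d → ℝ) × (Fin d → ℝ)) × (Fin d → ℝ)) →L[ℝ] _) = G' := by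
    ext x <;> rfl
  have hG'e : HasFDerivAt (Gmap ω i)
      ((eqv : (((Fin d → ℝ) × (Fin d → ℝ)) × (Fin d → ℝ)) ≃L[ℝ] _) :
        (((Fin d → ℝ) × (Fin d → ℝ)) × (Fin d → ℝ)) →L[ℝ] _) ((v₀, w₀), 0) := by
    rw [heqvcoe]; exact hG'
  -- smoothness of Gmap at the base point
  have hA1c : ContDiff ℝ 2 (fun x : ((Fin d → ℝ) × (Fin d → ℝ)) × (Fin d → ℝ) => x.1.1) :=
    contDiff_fst.comp contDiff_fst
  have hA2c : ContDiff ℝ 2 (fun x : ((Fin d → ℝ) × (Fin d → ℝ)) × (Fin d → ℝ) => x.1.2) :=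
    contDiff_snd.comp contDiff_fst
  have hΦc : ContDiffAt ℝ 2 (Phi ω) ((v₀, w₀), 0) := by
    have c1 : ContDiffAt ℝ 2
        (fun x : ((Fin d → ℝ) × (Fin d → ℝ)) × (Fin d → ℝ) => ω x.1.1) ((v₀, w₀), 0) :=
      ContDiffAt.comp _ hωv hA1c.contDiffAt
    have c2 : ContDiffAt ℝ 2
        (fun x : ((Fin d → ℝ) × (Fin d → ℝ)) × (Fin d → ℝ) => ω x.1.2) ((v₀, w₀), 0) :=
      ContDiffAt.comp _ hωw hA2c.contDiffAt
    have c3 : ContDiffAt ℝ 2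
        (fun x : ((Fin d → ℝ) × (Fin d → ℝ)) × (Fin d → ℝ) => ω (x.1.1 - x.2))
        ((v₀, w₀), 0) := by
      have hD : ContDiffAt ℝ 2 ω (v₀ - 0) := by rwa [sub_zero]
      exact ContDiffAt.comp _ hD (hA1c.sub contDiff_snd).contDiffAt
    have c4 : ContDiffAt ℝ 2
        (fun x : ((Fin d → ℝ) × (Fin d → ℝ)) × (Fin d → ℝ) => ω (x.1.2 + x.2))
        ((v₀, w₀), 0) := by
      have hD : ContDiffAt ℝ 2 ω (w₀ + 0) := by rwa [add_zero]
      exact ContDiffAt.comp _ hD (hA2c.add contDiff_snd).contDiffAt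
    exact ((c1.add c2).sub c3).sub c4
  have hzic : ContDiff ℝ 2 (fun x : ((Fin d → ℝ) × (Fin d → ℝ)) × (Fin d → ℝ) => x.2 i) :=
    (ContinuousLinearMap.proj (R := ℝ) (φ := fun _ : Fin d => ℝ) i).contDiff.comp contDiff_snd
  have hG2 : ContDiffAt ℝ 2 (Gmap ω i) ((v₀, w₀), 0) := by
    refine ContDiffAt.prodMk contDiffAt_fst ?_
    exact contDiffAt_snd.add ((hΦc.sub hzic.contDiffAt).smul contDiffAt_const)
  -- local inverse
  have hS : HasStrictFDerivAt (Gmap ω i)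
      ((eqv : (((Fin d → ℝ) × (Fin d → ℝ)) × (Fin d → ℝ)) ≃L[ℝ] _) :
        (((Fin d → ℝ) × (Fin d → ℝ)) × (Fin d → ℝ)) →L[ℝ] _) ((v₀, w₀), 0) :=
    hG2.hasStrictFDerivAt' hG'e two_ne_zero
  set H := hS.localInverse (Gmap ω i) eqv ((v₀, w₀), 0) with hHdef
  have hGa : Gmap ω i ((v₀, w₀), (0 : Fin d → ℝ)) = ((v₀, w₀), 0) := Gmap_zero ω i (v₀, w₀)
  have hH2 : ContDiffAt ℝ 2 H ((v₀, w₀), 0) := by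
    have := hG2.to_localInverse hG'e two_ne_zero
    rwa [hGa] at this
  have hleft : ∀ᶠ x in nhds ((v₀, w₀), (0 : Fin d → ℝ)), H (Gmap ω i x) = x :=
    hS.eventually_left_inverse
  have hright : ∀ᶠ y in nhds ((v₀, w₀), (0 : Fin d → ℝ)), Gmap ω i (H y) = y := by
    have := hS.eventually_right_inverse
    rwa [hGa] at this
  -- the parameterized embedding into the domain of Gmap
  set θ : (((Fin d → ℝ) × (Fin d → ℝ)) × (Fin (d - 1) → ℝ)) →
      (((Fin d → ℝ) × (Fin d → ℝ)) × (Fin d → ℝ)) := fun q => (q.1, iota hd i q.2) with hθdef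
  have hθc : ContDiff ℝ 2 θ := contDiff_fst.prodMk ((contDiff_iota hd i).comp contDiff_snd)
  have hθb : θ ((v₀, w₀), 0) = ((v₀, w₀), 0) := by
    simp only [hθdef, iota_zero]
  set ψ₀ : (((Fin d → ℝ) × (Fin d → ℝ)) × (Fin (d - 1) → ℝ)) → (Fin d → ℝ) :=
    fun q => (H (θ q)).2 with hψ₀def
  have hψ₀At : ContDiffAt ℝ 2 ψ₀ ((v₀, w₀), 0) := by
    have hH2' : ContDiffAt ℝ 2 H (θ ((v₀, w₀), 0)) := by rw [hθb]; exact hH2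
    exact ContDiffAt.comp _ contDiffAt_snd (hH2'.comp _ hθc.contDiffAt)
  obtain ⟨u, hu, husm⟩ : ∃ u ∈ nhds ((((v₀, w₀), 0)) :
      ((Fin d → ℝ) × (Fin d → ℝ)) × (Fin (d - 1) → ℝ)), ContDiffOn ℝ 2 ψ₀ u :=
    hψ₀At.contDiffOn le_rfl (by simp)
  have huo : interior u ∈ nhds ((((v₀, w₀), 0)) :
      ((Fin d → ℝ) × (Fin d → ℝ)) × (Fin (d - 1) → ℝ)) :=
    isOpen_interior.mem_nhds (mem_interior_iff_mem_nhds.mpr hu)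
  have husm' : ContDiffOn ℝ 2 ψ₀ (interior u) := husm.mono interior_subset
  -- the set where the gradients differ is a neighborhood
  have hfdc : ContinuousOn (fderiv ℝ ω) {v : Fin d → ℝ | v ≠ 0} :=
    hω.continuousOn_fderiv_of_isOpen hopen0 one_le_two
  have hS3' : {p : (Fin d → ℝ) × (Fin d → ℝ) |
      p.1 ≠ 0 ∧ p.2 ≠ 0 ∧ fderiv ℝ ω p.1 ≠ fderiv ℝ ω p.2} ∈ nhds (v₀, w₀) := by
    have hfv : ContinuousAt (fderiv ℝ ω) v₀ := hfdc.continuousAt (hopen0.mem_nhds hv₀)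
    have hfw : ContinuousAt (fderiv ℝ ω) w₀ := hfdc.continuousAt (hopen0.mem_nhds hw₀)
    have h1 : (Prod.fst ⁻¹' {v : Fin d → ℝ | v ≠ 0} :
        Set ((Fin d → ℝ) × (Fin d → ℝ))) ∈ nhds (v₀, w₀) :=
      continuousAt_fst.preimage_mem_nhds (hopen0.mem_nhds hv₀)
    have h2 : (Prod.snd ⁻¹' {v : Fin d → ℝ | v ≠ 0} :
        Set ((Fin d → ℝ) × (Fin d → ℝ))) ∈ nhds (v₀, w₀) :=
      continuousAt_snd.preimage_mem_nhds (hopen0.mem_nhds hw₀)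
    have hc : ContinuousAt (fun p : (Fin d → ℝ) × (Fin d → ℝ) =>
        (fderiv ℝ ω p.1, fderiv ℝ ω p.2)) (v₀, w₀) :=
      (hfv.comp continuousAt_fst).prodMk (hfw.comp continuousAt_snd)
    have hop : IsOpen {q : ((Fin d → ℝ) →L[ℝ] ℝ) × ((Fin d → ℝ) →L[ℝ] ℝ) | q.1 ≠ q.2} :=
      isClosed_diagonal.isOpen_compl
    have h3 : ((fun p : (Fin d → ℝ) × (Fin d → ℝ) => (fderiv ℝ ω p.1, fderiv ℝ ω p.2)) ⁻¹'
          {q : ((Fin d → ℝ) →L[ℝ] ℝ) × ((Fin d → ℝ) →L[ℝ] ℝ) | q.1 ≠ q.2})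
        ∈ nhds (v₀, w₀) := hc.preimage_mem_nhds (hop.mem_nhds hgrad)
    filter_upwards [h1, h2, h3] with p hp1 hp2 hp3
    exact ⟨hp1, hp2, hp3⟩
  -- collect all neighborhood conditions
  have ev1 : {q : ((Fin d → ℝ) × (Fin d → ℝ)) × (Fin (d - 1) → ℝ) |
      Gmap ω i (H (θ q)) = θ q} ∈ nhds ((v₀, w₀), 0) := by
    have : θ ⁻¹' {y | Gmap ω i (H y) = y} ∈
        nhds ((((v₀, w₀), 0)) : ((Fin d → ℝ) × (Fin d → ℝ)) × (Fin (d - 1) → ℝ)) := by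
      refine ContinuousAt.preimage_mem_nhds hθc.continuous.continuousAt ?_
      rw [hθb]
      exact hright
    exact this
  have ev2 : {q : ((Fin d → ℝ) × (Fin d → ℝ)) × (Fin (d - 1) → ℝ) |
      H (Gmap ω i (q.1, 0)) = (q.1, 0)} ∈ nhds ((v₀, w₀), 0) := by
    have hτ : ContinuousAt (fun q : ((Fin d → ℝ) × (Fin d → ℝ)) × (Fin (d - 1) → ℝ) =>
        ((q.1, (0 : Fin d → ℝ)) : ((Fin d → ℝ) × (Fin d → ℝ)) × (Fin d → ℝ)))
        ((v₀, w₀), 0) := (continuous_fst.prodMk continuous_const).continuousAt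
    have : (fun q : ((Fin d → ℝ) × (Fin d → ℝ)) × (Fin (d - 1) → ℝ) =>
        ((q.1, (0 : Fin d → ℝ)) : ((Fin d → ℝ) × (Fin d → ℝ)) × (Fin d → ℝ))) ⁻¹'
        {x | H (Gmap ω i x) = x} ∈
        nhds ((((v₀, w₀), 0)) : ((Fin d → ℝ) × (Fin d → ℝ)) × (Fin (d - 1) → ℝ)) :=
      hτ.preimage_mem_nhds hleft
    exact this
  have ev3 : {q : ((Fin d → ℝ) × (Fin d → ℝ)) × (Fin (d - 1) → ℝ) |
      q.1.1 ≠ 0 ∧ q.1.2 ≠ 0 ∧ fderiv ℝ ω q.1.1 ≠ fderiv ℝ ω q.1.2} ∈ nhds ((v₀, w₀), 0) := by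
    have : (Prod.fst ⁻¹' {p : (Fin d → ℝ) × (Fin d → ℝ) |
        p.1 ≠ 0 ∧ p.2 ≠ 0 ∧ fderiv ℝ ω p.1 ≠ fderiv ℝ ω p.2} :
        Set (((Fin d → ℝ) × (Fin d → ℝ)) × (Fin (d - 1) → ℝ))) ∈ nhds ((v₀, w₀), 0) :=
      continuousAt_fst.preimage_mem_nhds hS3'
    exact this
  have hN : ({q : ((Fin d → ℝ) × (Fin d → ℝ)) × (Fin (d - 1) → ℝ) |
        Gmap ω i (H (θ q)) = θ q} ∩
      {q : ((Fin d → ℝ) × (Fin d → ℝ)) × (Fin (d - 1) → ℝ) |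
        H (Gmap ω i (q.1, 0)) = (q.1, 0)} ∩
      {q : ((Fin d → ℝ) × (Fin d → ℝ)) × (Fin (d - 1) → ℝ) |
        q.1.1 ≠ 0 ∧ q.1.2 ≠ 0 ∧ fderiv ℝ ω q.1.1 ≠ fderiv ℝ ω q.1.2} ∩ interior u)
      ∈ nhds ((v₀, w₀), 0) :=
    Filter.inter_mem (Filter.inter_mem (Filter.inter_mem ev1 ev2) ev3) huo
  obtain ⟨ε, hε, hball⟩ := Metric.mem_nhds_iff.mp hN
  have hmemY : ∀ (p : (Fin d → ℝ) × (Fin d → ℝ)) (σ : Fin (d - 1) → ℝ),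
      p ∈ Metric.ball (v₀, w₀) (ε / 2) → σ ∈ Metric.ball 0 (ε / 2) →
      (((p, σ)) : ((Fin d → ℝ) × (Fin d → ℝ)) × (Fin (d - 1) → ℝ)) ∈
        Metric.ball (((v₀, w₀), 0) :
          ((Fin d → ℝ) × (Fin d → ℝ)) × (Fin (d - 1) → ℝ)) (ε / 2) := by
    intro p σ h1 h2
    rw [← ball_prod_same]
    exact Set.mk_mem_prod h1 h2
  -- the key local identities
  have key : ∀ (p : (Fin d → ℝ) × (Fin d → ℝ)) (σ : Fin (d - 1) → ℝ),
      p ∈ Metric.ball (v₀, w₀) (ε / 2) → σ ∈ Metric.ball 0 (ε / 2) →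
      Phi ω (p, ψ₀ (p, σ)) = 0 ∧ ∀ k, ψ₀ (p, σ) (emb hd i k) = σ k := by
    intro p σ hp hσ
    have hqN := hball (Metric.ball_subset_ball (by linarith) (hmemY p σ hp hσ))
    have hGH : Gmap ω i (H (θ (p, σ))) = θ (p, σ) := hqN.1.1.1
    set y := H (θ (p, σ)) with hy
    have h1 : y.1 = p := congrArg Prod.fst hGH
    have h2 : y.2 + (Phi ω y - y.2 i) • (Pi.single i 1 : Fin d → ℝ) = iota hd i σ :=
      congrArg Prod.snd hGH
    have hPhiy : Phi ω y = 0 := by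
      have h := congrFun h2 i
      rw [iota_apply_i] at h
      simp only [Pi.add_apply, Pi.smul_apply, Pi.single_eq_same, smul_eq_mul, mul_one] at h
      linarith
    constructor
    · have hy2 : Phi ω (p, y.2) = 0 := by rw [← h1]; simpa using hPhiy
      exact hy2
    · intro k
      have h := congrFun h2 (emb hd i k)
      rw [iota_apply_emb] at h
      simpa [Pi.single_eq_of_ne (emb_ne hd i k)] using h
  -- the bump function
  set χ : ContDiffBump ((((v₀, w₀), 0)) :
      ((Fin d → ℝ) × (Fin d → ℝ)) × (Fin (d - 1) → ℝ)) :=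
    ⟨ε / 2, 3 * ε / 4, by linarith, by linarith⟩ with hχdef
  have hχ1 : ∀ q ∈ Metric.ball ((((v₀, w₀), 0)) :
      ((Fin d → ℝ) × (Fin d → ℝ)) × (Fin (d - 1) → ℝ)) (ε / 2), χ q = 1 := by
    intro q hq
    exact χ.one_of_mem_closedBall (Metric.ball_subset_closedBall hq)
  -- global regularity of the cut-off solution
  have hψfull : ContDiff ℝ 2
      (fun q : ((Fin d → ℝ) × (Fin d → ℝ)) × (Fin (d - 1) → ℝ) => χ q • ψ₀ q) := by
    rw [contDiff_iff_contDiffAt]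
    intro q
    by_cases hq : q ∈ Metric.ball ((((v₀, w₀), 0)) :
        ((Fin d → ℝ) × (Fin d → ℝ)) × (Fin (d - 1) → ℝ)) ε
    · have hqu : q ∈ interior u := (hball hq).2
      exact χ.contDiffAt.smul (husm'.contDiffAt (isOpen_interior.mem_nhds hqu))
    · have hq' : q ∈ (Metric.closedBall ((((v₀, w₀), 0)) :
          ((Fin d → ℝ) × (Fin d → ℝ)) × (Fin (d - 1) → ℝ)) (3 * ε / 4))ᶜ := by
        simp only [Set.mem_compl_iff, Metric.mem_closedBall, not_le]
        simp only [Metric.mem_ball, not_lt] at hq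
        linarith
      refine ContDiffAt.congr_of_eventuallyEq (contDiffAt_const (c := (0 : Fin d → ℝ))) ?_
      filter_upwards [Metric.isClosed_closedBall.isOpen_compl.mem_nhds hq'] with y hy
      have hy0 : (χ : (((Fin d → ℝ) × (Fin d → ℝ)) × (Fin (d - 1) → ℝ)) → ℝ) y = 0 := by
        have hns : y ∉ Function.support
            (χ : (((Fin d → ℝ) × (Fin d → ℝ)) × (Fin (d - 1) → ℝ)) → ℝ) := by
          rw [χ.support_eq]
          intro hy'
          exact hy (Metric.ball_subset_closedBall hy')
        exact Function.notMem_support.mp hns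
      simp [hy0]
  -- conclusion
  refine ⟨Metric.ball (v₀, w₀) (ε / 2), Metric.ball 0 (ε / 2),
    fun v w σ => χ ((v, w), σ) • ψ₀ ((v, w), σ),
    Metric.isOpen_ball, Metric.mem_ball_self (by linarith), Metric.isBounded_ball,
    ?_, Metric.isOpen_ball, Metric.mem_ball_self (by linarith), hψfull, ?_, ?_⟩
  · -- U is contained in the good set
    intro p hp
    have hq : (((p, 0)) : ((Fin d → ℝ) × (Fin d → ℝ)) × (Fin (d - 1) → ℝ)) ∈
        Metric.ball ((((v₀, w₀), 0)) :
          ((Fin d → ℝ) × (Fin d → ℝ)) × (Fin (d - 1) → ℝ)) ε :=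
      Metric.ball_subset_ball (by linarith) (hmemY p 0 hp (Metric.mem_ball_self (by linarith)))
    exact (hball hq).1.2
  · -- the two functional identities
    intro v w hvw
    constructor
    · have hN0 := hball (Metric.ball_subset_ball (by linarith)
        (hmemY (v, w) 0 hvw (Metric.mem_ball_self (by linarith))))
      have hev2 : H (Gmap ω i ((v, w), 0)) = ((v, w), 0) := hN0.1.1.2
      rw [Gmap_zero] at hev2
      have hz : ψ₀ ((v, w), 0) = 0 := by
        show (H (θ ((v, w), 0))).2 = 0
        have hθ0 : θ ((v, w), (0 : Fin (d - 1) → ℝ)) = ((v, w), (0 : Fin d → ℝ)) := by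
          simp only [hθdef, iota_zero]
        rw [hθ0, hev2]
      show χ ((v, w), 0) • ψ₀ ((v, w), 0) = 0
      rw [hz, smul_zero]
    · intro σ hσ
      have hχq : χ ((v, w), σ) = 1 := hχ1 _ (hmemY (v, w) σ hvw hσ)
      have hkey := (key (v, w) σ hvw hσ).1
      simp only [Phi] at hkey
      show ω v + ω w = ω (v - χ ((v, w), σ) • ψ₀ ((v, w), σ)) +
        ω (w + χ ((v, w), σ) • ψ₀ ((v, w), σ))
      rw [hχq, one_smul]
      linarith
  · -- the rank condition
    intro v w hvw
    show LinearMap.rank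
      ((fderiv ℝ (fun σ => χ ((v, w), σ) • ψ₀ ((v, w), σ)) 0 :
          (Fin (d - 1) → ℝ) →L[ℝ] (Fin d → ℝ)) :
        (Fin (d - 1) → ℝ) →ₗ[ℝ] (Fin d → ℝ)) = ((d - 1 : ℕ) : Cardinal)
    set f : (Fin (d - 1) → ℝ) → (Fin d → ℝ) :=
      fun σ => χ ((v, w), σ) • ψ₀ ((v, w), σ) with hfdef
    set πL : (Fin d → ℝ) →L[ℝ] (Fin (d - 1) → ℝ) :=
      ContinuousLinearMap.pi (fun k : Fin (d - 1) =>
        ContinuousLinearMap.proj (R := ℝ) (φ := fun _ : Fin d => ℝ) (emb hd i k)) with hπdef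
    have hfc : ContDiff ℝ 2 f :=
      hψfull.comp ((contDiff_const (c := (v, w))).prodMk contDiff_id)
    have hDf : DifferentiableAt ℝ f 0 := (hfc.differentiable two_ne_zero).differentiableAt
    have hcomp : fderiv ℝ (fun σ => πL (f σ)) 0 = πL.comp (fderiv ℝ f 0) :=
      (πL.hasFDerivAt.comp 0 hDf.hasFDerivAt).fderiv
    have hev : (fun σ => πL (f σ)) =ᶠ[nhds (0 : Fin (d - 1) → ℝ)] id := by
      filter_upwards [Metric.ball_mem_nhds (0 : Fin (d - 1) → ℝ)
        (by linarith : (0 : ℝ) < ε / 2)] with σ hσ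
      have hχq : χ ((v, w), σ) = 1 := hχ1 _ (hmemY (v, w) σ hvw hσ)
      have hk := (key (v, w) σ hvw hσ).2
      funext k
      simp only [hπdef, ContinuousLinearMap.pi_apply, ContinuousLinearMap.proj_apply,
        hfdef, hχq, one_smul, id_eq]
      exact hk k
    have hfd : πL.comp (fderiv ℝ f 0) =
        ContinuousLinearMap.id ℝ (Fin (d - 1) → ℝ) := by
      rw [← hcomp, hev.fderiv_eq, fderiv_id]
    have happ : ∀ x, πL ((fderiv ℝ f 0) x) = x := by
      intro x
      have := DFunLike.congr_fun hfd x
      simpa using this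
    have hinjD : Function.Injective (fderiv ℝ f 0) := by
      intro x y hxy
      rw [← happ x, ← happ y, hxy]
    calc LinearMap.rank ((fderiv ℝ f 0 : (Fin (d - 1) → ℝ) →L[ℝ] (Fin d → ℝ)) :
          (Fin (d - 1) → ℝ) →ₗ[ℝ] (Fin d → ℝ))
        = Module.rank ℝ (Fin (d - 1) → ℝ) := rank_range_of_injective _ hinjD
      _ = Fintype.card (Fin (d - 1)) := rank_fun'
      _ = ((d - 1 : ℕ) : Cardinal) := by simp
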